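/- Let G be a finite group acting quasi-transitively but not transitively on a finite set Ω. Then G acts primitively on each orbit: for every orbit Δ of G on Ω, the induced (faithful, transitive) action of G on Δ is preprimitive. -/

import Mathlib

set_option linter.unusedSectionVars false
set_option maxHeartbeats 1000000

open MulAction Set Pointwise

section Tools

variable {G Ω : Type*} [Group G] [Fintype G] [Fintype Ω] [MulAction G Ω]

lemma qt_smul_def (H : Subgroup G) (h : H) (x : Ω) : h • x = (h : G) • x := rfl

/-- Orbit–stabilizer for a subgroup, with the stabilizer computed in `G`. -/
lemma qt_tool1 (H : Subgroup G) (x : Ω) :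
    (MulAction.orbit H x).ncard * Nat.card ↥(H ⊓ MulAction.stabilizer G x) = Nat.card H := by
  have h1 : (MulAction.stabilizer H x).index = (MulAction.orbit H x).ncard :=
    MulAction.index_stabilizer H x
  have h2 : (MulAction.stabilizer H x).index * Nat.card (MulAction.stabilizer H x)
      = Nat.card H := Subgroup.index_mul_card _
  have h3 : Nat.card (MulAction.stabilizer H x) = Nat.card ↥(H ⊓ MulAction.stabilizer G x) := by
    apply Nat.card_congr
    exact {
      toFun := fun s => ⟨(s.1 : G), s.1.2, s.2⟩
      invFun := fun y => ⟨⟨y.1, y.2.1⟩, y.2.2⟩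
      left_inv := fun s => rfl
      right_inv := fun y => rfl }
  rw [← h1, ← h3, h2]

/-- All orbits of `H` on an invariant set `S` having the same size `e` forces `e ∣ S.ncard`. -/
lemma qt_tool2a (H : Subgroup G) (e : ℕ) :
    ∀ (n : ℕ) (S : Set Ω), S.ncard = n →
      (∀ (g : H) (x : Ω), x ∈ S → (g : G) • x ∈ S) →
      (∀ x ∈ S, (MulAction.orbit H x).ncard = e) → e ∣ n := by
  intro n
  induction n using Nat.strong_induction_on with
  | _ n ih =>
    intro S hn hinv he
    rcases S.eq_empty_or_nonempty with rfl | ⟨x, hx⟩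
    · simp only [Set.ncard_empty] at hn
      exact hn ▸ dvd_zero e
    · have hOsub : MulAction.orbit H x ⊆ S := by
        rintro y ⟨g, rfl⟩
        exact hinv g x hx
      have hOx : x ∈ MulAction.orbit H x := MulAction.mem_orbit_self x
      have hOne : (MulAction.orbit H x).Nonempty := ⟨x, hOx⟩
      have hOcard : (MulAction.orbit H x).ncard = e := he x hx
      have hepos : 0 < e := by
        rw [← hOcard]
        exact Set.ncard_pos (Set.toFinite _) |>.mpr hOne
      set S' := S \ MulAction.orbit H x with hS'
      have hsplit : S'.ncard + e = n := by
        rw [← hOcard, ← hn, hS']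
        exact Set.ncard_diff_add_ncard_of_subset hOsub (Set.toFinite _)
      have hlt : S'.ncard < n := by omega
      have hinv' : ∀ (g : H) (y : Ω), y ∈ S' → (g : G) • y ∈ S' := by
        rintro g y ⟨hyS, hyO⟩
        refine ⟨hinv g y hyS, fun hgy => hyO ?_⟩
        have : (g⁻¹ : H) • ((g : G) • y) ∈ MulAction.orbit H x := by
          rcases hgy with ⟨h, hh⟩
          exact ⟨g⁻¹ * h, by rw [← hh]; simp [qt_smul_def, mul_smul]⟩
        simpa [qt_smul_def, inv_smul_smul] using this
      have he' : ∀ y ∈ S', (MulAction.orbit H y).ncard = e := fun y hy => he y hy.1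
      obtain ⟨k, hk⟩ := ih S'.ncard hlt S' rfl hinv' he'
      exact ⟨k + 1, by rw [Nat.mul_add, Nat.mul_one]; omega⟩

/-- Either some orbit is all of `S`, or `S` contains at least two orbits. -/
lemma qt_tool2b (H : Subgroup G) (e : ℕ) (S : Set Ω) (hne : S.Nonempty)
    (hinv : ∀ (g : H) (x : Ω), x ∈ S → (g : G) • x ∈ S)
    (he : ∀ x ∈ S, (MulAction.orbit H x).ncard = e) :
    (∃ x ∈ S, MulAction.orbit H x = S) ∨ 2 * e ≤ S.ncard := by
  obtain ⟨x, hx⟩ := hne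
  have hOsub : MulAction.orbit H x ⊆ S := by rintro y ⟨g, rfl⟩; exact hinv g x hx
  by_cases hO : MulAction.orbit H x = S
  · exact Or.inl ⟨x, hx, hO⟩
  · right
    obtain ⟨y, hyS, hyO⟩ : ∃ y ∈ S, y ∉ MulAction.orbit H x := by
      by_contra hcon
      push_neg at hcon
      exact hO (Set.Subset.antisymm hOsub hcon)
    have hOsub' : MulAction.orbit H y ⊆ S := by rintro z ⟨g, rfl⟩; exact hinv g y hyS
    have hdisj : Disjoint (MulAction.orbit H x) (MulAction.orbit H y) := by
      rw [Set.disjoint_left]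
      rintro z ⟨g, rfl⟩ ⟨h, hh⟩
      apply hyO
      have : y = (h⁻¹ * g : H) • x := by
        simp only [] at hh
        rw [mul_smul, ← hh, inv_smul_smul]
      exact this ▸ MulAction.mem_orbit x (h⁻¹ * g)
    calc 2 * e = (MulAction.orbit H x).ncard + (MulAction.orbit H y).ncard := by
              rw [he x hx, he y hyS]; ring
      _ = (MulAction.orbit H x ∪ MulAction.orbit H y).ncard :=
              (Set.ncard_union_eq hdisj (Set.toFinite _) (Set.toFinite _)).symm
      _ ≤ S.ncard := Set.ncard_le_ncard (Set.union_subset hOsub hOsub') (Set.toFinite _)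

/-- Cardinality of a disjoint union of finitely many finite sets. -/
lemma qt_ncard_sUnion (I : Finset (Set Ω))
    (h : ∀ E ∈ I, ∀ F ∈ I, E ≠ F → Disjoint E F) :
    (⋃₀ (I : Set (Set Ω))).ncard = ∑ E ∈ I, E.ncard := by
  classical
  induction I using Finset.induction_on with
  | empty => simp
  | @insert E I hEI ih =>
    have hdisj : Disjoint E (⋃₀ (I : Set (Set Ω))) := by
      rw [Set.disjoint_sUnion_right]
      intro F hF
      exact h E (Finset.mem_insert_self E I) F (Finset.mem_insert_of_mem hF)
        (fun hEF => hEI (hEF ▸ hF))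
    rw [Finset.coe_insert, Set.sUnion_insert, Set.ncard_union_eq hdisj (Set.toFinite _)
      (Set.toFinite _), Finset.sum_insert hEI, ih]
    intro A hA B hB hAB
    exact h A (Finset.mem_insert_of_mem hA) B (Finset.mem_insert_of_mem hB) hAB

/-- From `P ≤ Q` and `Nat.card Q ≤ Nat.card P`, membership in `Q` gives membership in `P`. -/
lemma qt_mem_of_le_of_card_le {P Q : Subgroup G} (h : P ≤ Q)
    (hc : Nat.card ↥Q ≤ Nat.card ↥P) {x : G} (hx : x ∈ Q) : x ∈ P := by
  have hPQ : (P : Set G) = (Q : Set G) := by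
    apply Set.eq_of_subset_of_ncard_le h ?_ (Set.toFinite _)
    rw [← Nat.card_coe_set_eq, ← Nat.card_coe_set_eq]
    exact hc
  rw [← SetLike.mem_coe, hPQ]
  exact hx

lemma qt_orbit_eq_of_mem {x y : Ω} (h : y ∈ MulAction.orbit G x) :
    MulAction.orbit G y = MulAction.orbit G x := by
  obtain ⟨g, rfl⟩ := h
  exact MulAction.orbit_smul g x

/-- Key combinatorial lemma (Wielandt-style): if `γ` and `α` lie in distinct translates of a
block `Bt` of size at least 2, then any `g` fixing `α` and stabilizing the block of `γ`
must fix `γ`. -/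
lemma qt_lemB {t : ℕ} (ht : 1 ≤ t)
    (hqt : ∀ α β : Ω, α ≠ β →
      Nat.card ↥(MulAction.stabilizer G α ⊓ MulAction.stabilizer G β) = t)
    {Bt : Set Ω} (hBl : MulAction.IsBlock G Bt) {b : ℕ} (hb : Bt.ncard = b) (hb2 : 2 ≤ b)
    {α γ : Ω} {c e : G} (hγC : γ ∈ c • Bt) (hαD : α ∈ e • Bt) (hne : c • Bt ≠ e • Bt) :
    ∀ g : G, g • α = α → g • (c • Bt) = c • Bt → g • γ = γ := by
  classical
  set Hα := MulAction.stabilizer G α with hHα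
  have hdisjCD : Disjoint (c • Bt) (e • Bt) := hBl hne
  have hγα : γ ≠ α := fun h => Set.disjoint_left.mp hdisjCD hγC (h ▸ hαD)
  -- all orbits of the point stabilizer on `Ω \ {α}` have the same size `d`
  have horb : ∀ ρ : Ω, ρ ≠ α → ((MulAction.orbit Hα ρ).ncard) * t = Nat.card ↥Hα := by
    intro ρ hρ
    have h1 := qt_tool1 Hα ρ
    rwa [show Nat.card ↥(Hα ⊓ MulAction.stabilizer G ρ) = t from hqt α ρ (Ne.symm hρ)] at h1
  set d := (MulAction.orbit Hα γ).ncard with hd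
  have hdγ : ∀ ρ : Ω, ρ ≠ α → (MulAction.orbit Hα ρ).ncard = d := by
    intro ρ hρ
    exact Nat.eq_of_mul_eq_mul_right (by omega) ((horb ρ hρ).trans (horb γ hγα).symm)
  have hdpos : 0 < d :=
    Set.ncard_pos (Set.toFinite _) |>.mpr ⟨γ, MulAction.mem_orbit_self γ⟩
  -- invariance of the block of α under Hα
  have hDinv : ∀ g : G, g • α = α → g • (e • Bt) = e • Bt := by
    intro g hg
    by_contra hcon
    have hαmem : α ∈ g • (e • Bt) := hg ▸ Set.smul_mem_smul_set hαD
    have hdisj : Disjoint (g • (e • Bt)) (e • Bt) := by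
      rw [smul_smul] at hcon ⊢
      exact hBl hcon
    exact Set.disjoint_left.mp hdisj hαmem hαD
  -- Step (a) : d ∣ b - 1
  have hstep_a : d ∣ b - 1 := by
    apply qt_tool2a Hα d (b-1) ((e • Bt) \ {α})
    · rw [Set.ncard_diff_singleton_of_mem hαD, Set.ncard_smul_set, hb]
    · rintro g x ⟨hxD, hxα⟩
      have hgα : (g : G) • α = α := g.2
      constructor
      · rw [← hDinv (g : G) hgα]
        exact Set.smul_mem_smul_set hxD
      · simp only [Set.mem_singleton_iff] at hxα ⊢
        intro hcon
        exact hxα ((smul_left_cancel_iff ((g : G))).mp (hcon.trans hgα.symm))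
    · rintro x ⟨hxD, hxα⟩
      exact hdγ x (by simpa using hxα)
  have hb1 : 1 ≤ b := by omega
  have hcop : Nat.Coprime d b := by
    have h1 : Nat.gcd d b ∣ b - 1 := (Nat.gcd_dvd_left d b).trans hstep_a
    have h2 : Nat.gcd d b ∣ b := Nat.gcd_dvd_right d b
    have h3 : Nat.gcd d b ∣ 1 := by
      have h4 := Nat.dvd_sub h2 h1
      rwa [Nat.sub_sub_self hb1] at h4
    exact Nat.dvd_one.mp h3
  -- the family of blocks in the Hα-orbit of C
  set C := c • Bt with hC
  set 𝒞 : Set (Set Ω) := {E | ∃ h : G, h • α = α ∧ E = h • C} with h𝒞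
  have hCin : C ∈ 𝒞 := ⟨1, one_smul G α, (one_smul G C).symm⟩
  have htrans : ∀ E ∈ 𝒞, ∃ u : G, E = u • Bt := by
    rintro E ⟨h, hhα, rfl⟩
    exact ⟨h * c, by rw [hC, smul_smul]⟩
  have hpair : ∀ E ∈ 𝒞, ∀ F ∈ 𝒞, E ≠ F → Disjoint E F := by
    intro E hE F hF hEF
    obtain ⟨u, rfl⟩ := htrans E hE
    obtain ⟨v, rfl⟩ := htrans F hF
    exact hBl hEF
  have hαnot : ∀ E ∈ 𝒞, α ∉ E := by
    rintro E ⟨h, hhα, rfl⟩ hα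
    have h1 : h • C = e • Bt := by
      by_contra hcon
      have hdisj2 : Disjoint (h • C) (e • Bt) := by
        rw [hC, smul_smul] at hcon ⊢
        exact hBl hcon
      exact Set.disjoint_left.mp hdisj2 hα hαD
    have hinvα : h⁻¹ • α = α := by
      rw [inv_smul_eq_iff]; exact hhα.symm
    have h2 : h⁻¹ • (e • Bt) = e • Bt := hDinv h⁻¹ hinvα
    apply hne
    calc c • Bt = h⁻¹ • (h • C) := by rw [inv_smul_smul, hC]
      _ = h⁻¹ • (e • Bt) := by rw [h1]
      _ = e • Bt := h2
  set W := ⋃₀ 𝒞 with hW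
  have h𝒞fin : 𝒞.Finite := Set.toFinite _
  set I : Finset (Set Ω) := h𝒞fin.toFinset with hI
  have hIcoe : (I : Set (Set Ω)) = 𝒞 := h𝒞fin.coe_toFinset
  have hImem : ∀ E, E ∈ I ↔ E ∈ 𝒞 := fun E => h𝒞fin.mem_toFinset
  set l := I.card with hl
  have hpairI : ∀ E ∈ I, ∀ F ∈ I, E ≠ F → Disjoint E F := by
    intro E hE F hF
    exact hpair E ((hImem E).mp hE) F ((hImem F).mp hF)
  have hWcard : W.ncard = l * b := by
    rw [hW, ← hIcoe, qt_ncard_sUnion I hpairI]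
    rw [Finset.sum_congr rfl (fun E hE => show E.ncard = b from by
      obtain ⟨u, rfl⟩ := htrans E ((hImem E).mp hE)
      rw [Set.ncard_smul_set, hb])]
    rw [Finset.sum_const, smul_eq_mul]
  have hWinv : ∀ (g : Hα) (x : Ω), x ∈ W → (g : G) • x ∈ W := by
    rintro g x ⟨E, hE, hxE⟩
    obtain ⟨h, hhα, rfl⟩ := hE
    refine ⟨(g : G) • (h • C), ⟨(g : G) * h, ?_, by rw [mul_smul]⟩, Set.smul_mem_smul_set hxE⟩
    rw [mul_smul, hhα]
    exact g.2
  have hWne : ∀ x ∈ W, x ≠ α := by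
    rintro x ⟨E, hE, hxE⟩ rfl
    exact hαnot E hE hxE
  have hdivW : d ∣ l * b := by
    apply qt_tool2a Hα d (l * b) W hWcard hWinv
    intro x hx
    exact hdγ x (hWne x hx)
  have hdl : d ∣ l := hcop.dvd_of_dvd_mul_right hdivW
  -- the orbit of γ and its pieces
  set 𝒪 := MulAction.orbit Hα γ with h𝒪
  have hO_inv : ∀ g : G, g • α = α → g • 𝒪 = 𝒪 := by
    intro g hg
    apply Set.Subset.antisymm
    · rintro x ⟨y, ⟨h, rfl⟩, rfl⟩
      exact ⟨⟨g, hg⟩ * h, by simp [qt_smul_def, mul_smul]⟩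
    · rintro y ⟨h, rfl⟩
      refine ⟨((⟨g, hg⟩ : Hα)⁻¹ * h : Hα) • γ, ⟨_, rfl⟩, ?_⟩
      simp [qt_smul_def, mul_smul]
  set f := (𝒪 ∩ C).ncard with hf
  have hfpos : 0 < f :=
    Set.ncard_pos (Set.toFinite _) |>.mpr ⟨γ, MulAction.mem_orbit_self γ, hγC⟩
  have hpieces : ∀ E ∈ 𝒞, (𝒪 ∩ E).ncard = f := by
    rintro E ⟨h, hhα, rfl⟩
    conv_lhs => rw [← hO_inv h hhα]
    rw [← smul_set_inter, Set.ncard_smul_set]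
  -- the image finset of pieces
  set J : Finset (Set Ω) := I.image (fun E => 𝒪 ∩ E) with hJ
  have hJcard : J.card = l := by
    rw [hJ, Finset.card_image_of_injOn]
    intro E hE F hF hEF
    have hEF' : 𝒪 ∩ E = 𝒪 ∩ F := hEF
    by_contra hne'
    have hdisj3 := hpairI E (by simpa using hE) F (by simpa using hF) hne'
    have hnonE : (𝒪 ∩ E).Nonempty := by
      rw [← Set.ncard_pos (Set.toFinite _)]
      rw [hpieces E ((hImem E).mp (by simpa using hE))]
      exact hfpos
    obtain ⟨x, hx1, hx2⟩ := hnonE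
    have hxF : x ∈ 𝒪 ∩ F := by rw [← hEF']; exact ⟨hx1, hx2⟩
    exact Set.disjoint_left.mp hdisj3 hx2 hxF.2
  have hOsUnion : ⋃₀ (J : Set (Set Ω)) = 𝒪 := by
    apply Set.Subset.antisymm
    · rintro x ⟨F, hF, hxF⟩
      simp only [hJ, Finset.coe_image, Set.mem_image, Finset.mem_coe] at hF
      obtain ⟨E, hE, rfl⟩ := hF
      exact hxF.1
    · rintro x ⟨h, rfl⟩
      refine ⟨𝒪 ∩ ((h : G) • C), ?_, ⟨h, rfl⟩, Set.smul_mem_smul_set hγC⟩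
      simp only [hJ, Finset.coe_image, Set.mem_image, Finset.mem_coe]
      exact ⟨(h : G) • C, by rw [hImem]; exact ⟨(h : G), h.2, rfl⟩, rfl⟩
  have hpairJ : ∀ A ∈ J, ∀ B ∈ J, A ≠ B → Disjoint A B := by
    intro A hA B hB hAB
    simp only [hJ, Finset.mem_image] at hA hB
    obtain ⟨E, hE, hAe⟩ := hA
    obtain ⟨F, hF, hBe⟩ := hB
    have hAe' : 𝒪 ∩ E = A := hAe
    have hBe' : 𝒪 ∩ F = B := hBe
    have hEF : E ≠ F := fun h => hAB (by rw [← hAe', ← hBe', h])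
    rw [← hAe', ← hBe']
    exact Set.disjoint_of_subset Set.inter_subset_right Set.inter_subset_right
      (hpairI E hE F hF hEF)
  have hOcard2 : d = l * f := by
    show 𝒪.ncard = l * f
    rw [← hOsUnion, qt_ncard_sUnion J hpairJ]
    rw [Finset.sum_congr rfl (fun A hA => show A.ncard = f from by
      obtain ⟨E, hE, hAe⟩ := Finset.mem_image.mp hA
      have hAe' : 𝒪 ∩ E = A := hAe
      rw [← hAe']
      exact hpieces E ((hImem E).mp hE))]
    rw [Finset.sum_const, smul_eq_mul, hJcard]
  have hld : l = d := Nat.dvd_antisymm ⟨f, hOcard2⟩ hdl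
  have hf1 : f = 1 := by
    have h5 : d * 1 = d * f := by
      rw [mul_one]
      conv_lhs => rw [hOcard2, hld]
    exact (Nat.eq_of_mul_eq_mul_left hdpos h5).symm
  have hsingle : 𝒪 ∩ C = {γ} := by
    obtain ⟨a, ha⟩ := Set.ncard_eq_one.mp (by rw [← hf]; exact hf1)
    have hγ𝒪C : γ ∈ 𝒪 ∩ C := ⟨MulAction.mem_orbit_self γ, hγC⟩
    rw [ha] at hγ𝒪C ⊢
    simp only [Set.mem_singleton_iff] at hγ𝒪C
    rw [hγ𝒪C]
  intro g hgα hgC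
  have hmem𝒪 : g • γ ∈ 𝒪 := ⟨⟨g, hgα⟩, rfl⟩
  have hmemC : g • γ ∈ C := hgC ▸ Set.smul_mem_smul_set hγC
  have hgγ : g • γ ∈ 𝒪 ∩ C := ⟨hmem𝒪, hmemC⟩
  rw [hsingle] at hgγ
  exact hgγ

end Tools

section Main

variable {G Ω : Type*} [Group G] [Fintype G] [Fintype Ω] [MulAction G Ω]

/-- A finite quasi-transitive but intransitive group acts primitively on each orbit:
the induced action on each orbit is transitive and every block of this action is trivial
(preprimitivity). -/
theorem quasiTransitive_intransitive_preprimitive_on_orbits'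
    [FaithfulSMul G Ω]
    (t : ℕ) (ht : 1 < t)
    (hqt : ∀ α β : Ω, α ≠ β →
      Nat.card ↥(MulAction.stabilizer G α ⊓ MulAction.stabilizer G β) = t)
    (hnt : ¬ MulAction.IsPretransitive G Ω) :
    ∀ α : Ω, MulAction.IsPretransitive G ↥(MulAction.orbit G α) ∧
      ∀ B : Set ↥(MulAction.orbit G α), MulAction.IsBlock G B →
        MulAction.IsTrivialBlock B := by
  classical
  intro α₀
  set Δ := MulAction.orbit G α₀ with hΔ
  refine ⟨inferInstance, ?_⟩
  intro B hB
  by_contra hnotriv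
  rw [MulAction.IsTrivialBlock, not_or] at hnotriv
  obtain ⟨hnotsub, hnotuniv⟩ := hnotriv
  rw [Set.not_subsingleton_iff] at hnotsub
  obtain ⟨x, hxB, y, hyB, hxy⟩ := hnotsub
  obtain ⟨w, hw⟩ : ∃ w : ↥(MulAction.orbit G α₀), w ∉ B := by
    by_contra hcon
    push_neg at hcon
    exact hnotuniv (Set.eq_univ_of_forall hcon)
  set Bt : Set Ω := Subtype.val '' B with hBt
  -- transfer of the block property to Ω
  have hsmul_im : ∀ (g : G), g • Bt = Subtype.val '' (g • B) := by
    intro g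
    ext z
    constructor
    · rintro ⟨z₀, ⟨u, huB, rfl⟩, rfl⟩
      exact ⟨g • u, Set.smul_mem_smul_set huB, rfl⟩
    · rintro ⟨u, ⟨v, hvB, rfl⟩, rfl⟩
      exact ⟨(v : Ω), ⟨v, hvB, rfl⟩, rfl⟩
  have hBl : MulAction.IsBlock G Bt := by
    intro g₁ g₂ hne12
    rw [hsmul_im, hsmul_im] at hne12 ⊢
    have hne' : g₁ • B ≠ g₂ • B := fun h => hne12 (by rw [h])
    have hdisj := hB hne'
    rw [Set.disjoint_left] at hdisj ⊢
    rintro z ⟨u, huB, rfl⟩ ⟨v, hvB, hvu⟩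
    have hvu' : v = u := Subtype.val_injective hvu
    exact hdisj huB (hvu' ▸ hvB)
  set α : Ω := (x : Ω) with hαdef
  set β : Ω := (y : Ω) with hβdef
  have hαβ : α ≠ β := fun h => hxy (Subtype.val_injective h)
  have hαB : α ∈ Bt := ⟨x, hxB, rfl⟩
  have hβB : β ∈ Bt := ⟨y, hyB, rfl⟩
  have hBtΔ : Bt ⊆ Δ := by rintro z ⟨u, hu, rfl⟩; exact u.2
  have hwout : (w : Ω) ∈ Δ ∧ (w : Ω) ∉ Bt := by
    refine ⟨w.2, fun hcon => ?_⟩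
    obtain ⟨u, huB, huw⟩ := hcon
    exact hw ((Subtype.val_injective huw) ▸ huB)
  set n := Δ.ncard with hn
  set b := Bt.ncard with hbdef
  have hb2 : 2 ≤ b := by
    have : 1 < Bt.ncard := (Set.one_lt_ncard (Set.toFinite _)).mpr ⟨α, hαB, β, hβB, hαβ⟩
    omega
  have hbn : b < n := by
    apply Set.ncard_lt_ncard ?_ (Set.toFinite _)
    exact ⟨hBtΔ, fun hcon => hwout.2 (hcon hwout.1)⟩
  have hn2 : 2 ≤ n := by omega
  have ht1 : 1 ≤ t := by omega
  -- every point of Δ lies in a translate of Bt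
  have hcover : ∀ ρ ∈ Δ, ∃ g : G, ρ ∈ g • Bt := by
    intro ρ hρ
    obtain ⟨g₁, hg₁⟩ := hρ
    obtain ⟨g₂, hg₂⟩ := hBtΔ hαB
    refine ⟨g₁ * g₂⁻¹, ?_⟩
    have : (g₁ * g₂⁻¹) • α = ρ := by
      have hg₁' : g₁ • α₀ = ρ := hg₁
      have hg₂' : g₂ • α₀ = α := hg₂
      rw [mul_smul, ← hg₂', inv_smul_smul, hg₁']
    exact this ▸ Set.smul_mem_smul_set hαB
  -- translates of Bt within Δ stay in Δ
  have hblocksub : ∀ c : G, c • Bt ⊆ Δ := by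
    rintro c z ⟨z₀, hz₀, rfl⟩
    obtain ⟨g, hg⟩ := hBtΔ hz₀
    have hg' : g • α₀ = z₀ := hg
    exact ⟨c * g, show (c * g) • α₀ = c • z₀ by rw [mul_smul, hg']⟩
  -- Lemma C : cross-block pair stabilizers fix both blocks pointwise
  have lemC : ∀ (ρ σ : Ω) (cρ cσ : G), ρ ∈ cρ • Bt → σ ∈ cσ • Bt → cρ • Bt ≠ cσ • Bt →
      ∀ u : G, u • ρ = ρ → u • σ = σ →
        (∀ δ ∈ cρ • Bt, u • δ = δ) ∧ (∀ δ ∈ cσ • Bt, u • δ = δ) := by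
    intro ρ σ cρ cσ hρm hσm hnecc u huρ huσ
    have huCσ : u • (cσ • Bt) = cσ • Bt := by
      by_contra hcon
      have hd : Disjoint (u • (cσ • Bt)) (cσ • Bt) := by
        rw [smul_smul] at hcon ⊢
        exact hBl hcon
      exact Set.disjoint_left.mp hd (huσ ▸ Set.smul_mem_smul_set hσm) hσm
    have huCρ : u • (cρ • Bt) = cρ • Bt := by
      by_contra hcon
      have hd : Disjoint (u • (cρ • Bt)) (cρ • Bt) := by
        rw [smul_smul] at hcon ⊢
        exact hBl hcon
      exact Set.disjoint_left.mp hd (huρ ▸ Set.smul_mem_smul_set hρm) hρm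
    constructor
    · intro δ hδ
      exact qt_lemB ht1 hqt hBl rfl hb2 hδ hσm hnecc u huσ huCρ
    · intro δ hδ
      exact qt_lemB ht1 hqt hBl rfl hb2 hδ hρm (Ne.symm hnecc) u huρ huCσ
  -- Lemma D : cross-block pair stabilizers fix all of Δ pointwise
  have lemD : ∀ (ρ σ : Ω) (cρ cσ : G), ρ ∈ Δ → σ ∈ Δ → ρ ∈ cρ • Bt → σ ∈ cσ • Bt →
      cρ • Bt ≠ cσ • Bt → ∀ u : G, u • ρ = ρ → u • σ = σ → ∀ ε ∈ Δ, u • ε = ε := by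
    intro ρ σ cρ cσ hρΔ hσΔ hρm hσm hnecc u huρ huσ ε hεΔ
    have hC := lemC ρ σ cρ cσ hρm hσm hnecc u huρ huσ
    by_cases hερ : ε ∈ cρ • Bt
    · exact hC.1 ε hερ
    by_cases hεσ : ε ∈ cσ • Bt
    · exact hC.2 ε hεσ
    obtain ⟨cε, hεm⟩ := hcover ε hεΔ
    have hneρε : cε • Bt ≠ cρ • Bt := fun h => hερ (h ▸ hεm)
    have hρε : ρ ≠ ε := fun h => hερ (h ▸ hρm)
    have h2card : 1 < (cρ • Bt).ncard := by rw [Set.ncard_smul_set, ← hbdef]; omega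
    obtain ⟨ρ'', hρ''m, hρ''ρ⟩ := Set.exists_ne_of_one_lt_ncard h2card ρ
    have hCV : ∀ v : G, v ∈ MulAction.stabilizer G ρ ⊓ MulAction.stabilizer G ε →
        (∀ δ ∈ cρ • Bt, v • δ = δ) ∧ (∀ δ ∈ cε • Bt, v • δ = δ) := by
      intro v hv
      exact lemC ρ ε cρ cε hρm hεm (Ne.symm hneρε) v
        (MulAction.mem_stabilizer_iff.mp hv.1) (MulAction.mem_stabilizer_iff.mp hv.2)
    have hVP : MulAction.stabilizer G ρ ⊓ MulAction.stabilizer G ε ≤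
        MulAction.stabilizer G ρ ⊓ MulAction.stabilizer G ρ'' := by
      intro v hv
      exact ⟨hv.1, MulAction.mem_stabilizer_iff.mpr ((hCV v hv).1 ρ'' hρ''m)⟩
    have hcards : Nat.card ↥(MulAction.stabilizer G ρ ⊓ MulAction.stabilizer G ρ'')
        ≤ Nat.card ↥(MulAction.stabilizer G ρ ⊓ MulAction.stabilizer G ε) := by
      rw [hqt ρ ε hρε, hqt ρ ρ'' (Ne.symm hρ''ρ)]
    have huP : u ∈ MulAction.stabilizer G ρ ⊓ MulAction.stabilizer G ρ'' :=
      ⟨MulAction.mem_stabilizer_iff.mpr huρ,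
        MulAction.mem_stabilizer_iff.mpr (hC.1 ρ'' hρ''m)⟩
    have huV := qt_mem_of_le_of_card_le hVP hcards huP
    exact (hCV u huV).2 ε hεm
  -- Lemma E : every pair stabilizer of points of Δ fixes Δ pointwise
  have lemE : ∀ ρ σ : Ω, ρ ∈ Δ → σ ∈ Δ → ρ ≠ σ → ∀ u : G,
      u ∈ MulAction.stabilizer G ρ ⊓ MulAction.stabilizer G σ → ∀ ζ ∈ Δ, u • ζ = ζ := by
    intro ρ σ hρΔ hσΔ hρσ u hu ζ hζΔ
    obtain ⟨cρ, hρm⟩ := hcover ρ hρΔ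
    obtain ⟨cσ, hσm⟩ := hcover σ hσΔ
    by_cases hcc : cρ • Bt = cσ • Bt
    · -- same block : pick a point of Δ outside this block
      obtain ⟨ε, hεΔ, hεnot⟩ : ∃ ε ∈ Δ, ε ∉ cρ • Bt := by
        by_contra hcon
        push_neg at hcon
        have hsub : Δ ⊆ cρ • Bt := hcon
        have : n ≤ (cρ • Bt).ncard := by
          rw [hn]; exact Set.ncard_le_ncard hsub (Set.toFinite _)
        rw [Set.ncard_smul_set, ← hbdef] at this
        omega
      obtain ⟨cε, hεm⟩ := hcover ε hεΔ
      have hneq : cρ • Bt ≠ cε • Bt := fun h => hεnot (h ▸ hεm)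
      have hρε : ρ ≠ ε := fun h => hεnot (h ▸ hρm)
      have hVfix : ∀ v ∈ MulAction.stabilizer G ρ ⊓ MulAction.stabilizer G ε,
          ∀ ζ' ∈ Δ, v • ζ' = ζ' := by
        intro v hv
        exact lemD ρ ε cρ cε hρΔ hεΔ hρm hεm hneq v
          (MulAction.mem_stabilizer_iff.mp hv.1) (MulAction.mem_stabilizer_iff.mp hv.2)
      have hVle : MulAction.stabilizer G ρ ⊓ MulAction.stabilizer G ε ≤
          MulAction.stabilizer G ρ ⊓ MulAction.stabilizer G σ := by
        intro v hv
        exact ⟨hv.1, MulAction.mem_stabilizer_iff.mpr (hVfix v hv σ hσΔ)⟩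
      have hcards : Nat.card ↥(MulAction.stabilizer G ρ ⊓ MulAction.stabilizer G σ)
          ≤ Nat.card ↥(MulAction.stabilizer G ρ ⊓ MulAction.stabilizer G ε) := by
        rw [hqt ρ σ hρσ, hqt ρ ε hρε]
      exact hVfix u (qt_mem_of_le_of_card_le hVle hcards hu) ζ hζΔ
    · exact lemD ρ σ cρ cσ hρΔ hσΔ hρm hσm hcc u
        (MulAction.mem_stabilizer_iff.mp hu.1) (MulAction.mem_stabilizer_iff.mp hu.2) ζ hζΔ
  -- the kernel-like subgroup K
  have hαΔ : α ∈ Δ := hBtΔ hαB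
  have hβΔ : β ∈ Δ := hBtΔ hβB
  set K := MulAction.stabilizer G α ⊓ MulAction.stabilizer G β with hK
  have hKcard : Nat.card ↥K = t := hqt α β hαβ
  have hKfix : ∀ u ∈ K, ∀ ζ ∈ Δ, u • ζ = ζ := fun u hu => lemE α β hαΔ hβΔ hαβ u hu
  -- a nontrivial element z of K, and a point ω moved by z
  obtain ⟨z, hzK, hz1⟩ : ∃ z ∈ K, z ≠ 1 := by
    have h2 : 1 < (K : Set G).ncard := by
      rw [← Nat.card_coe_set_eq]
      have : Nat.card ↥((K : Set G)) = Nat.card ↥K := rfl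
      omega
    obtain ⟨z, hz, hzne⟩ := Set.exists_ne_of_one_lt_ncard h2 1
    exact ⟨z, hz, hzne⟩
  obtain ⟨ω, hωz⟩ : ∃ ω : Ω, z • ω ≠ ω := by
    by_contra hcon
    push_neg at hcon
    exact hz1 (FaithfulSMul.eq_of_smul_eq_smul (fun ω' => by rw [hcon ω', one_smul]))
  have hωΔ : ω ∉ Δ := fun hcon => hωz (hKfix z hzK ω hcon)
  have hρω : ∀ ρ ∈ Δ, ρ ≠ ω := fun ρ hρ h => hωΔ (h ▸ hρ)
  set Γ := MulAction.orbit G ω with hΓ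
  set m := Γ.ncard with hm
  have hm2 : 2 ≤ m := by
    have : 1 < Γ.ncard := (Set.one_lt_ncard (Set.toFinite _)).mpr
      ⟨z • ω, MulAction.mem_orbit ω z, ω, MulAction.mem_orbit_self ω, hωz⟩
    omega
  set Gω := MulAction.stabilizer G ω with hGω
  set Kω := K ⊓ Gω with hKω
  set u := Nat.card ↥Kω with hudef
  have hupos : 0 < u := Nat.card_pos
  have hut : u ∣ t := by
    rw [← hKcard, hudef, hKω]
    exact Subgroup.card_dvd_of_le inf_le_left
  have hune : u ≠ t := by
    intro hcon
    have hle : Kω ≤ K := inf_le_left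
    have hzKω : z ∈ Kω := qt_mem_of_le_of_card_le hle (by rw [hKcard, ← hcon]) hzK
    exact hωz (MulAction.mem_stabilizer_iff.mp hzKω.2)
  have h2u : 2 * u ≤ t := by
    obtain ⟨k, hk⟩ := hut
    have hk2 : 2 ≤ k := by
      rcases Nat.lt_or_ge k 2 with hlt | hge
      · interval_cases k <;> omega
      · exact hge
    calc 2 * u ≤ u * k := by nlinarith
      _ = t := hk.symm
  have hut' : u < t := by omega
  -- counting inside Gω : n * (t - u) + u ≤ |Gω|
  have hKle : ∀ ρ ∈ Δ, Kω ≤ MulAction.stabilizer G ρ ⊓ Gω := by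
    intro ρ hρ v hv
    exact ⟨MulAction.mem_stabilizer_iff.mpr (hKfix v hv.1 ρ hρ), hv.2⟩
  set AΔ : Finset Ω := (Set.toFinite Δ).toFinset with hAΔ
  have hAΔmem : ∀ ρ : Ω, ρ ∈ AΔ ↔ ρ ∈ Δ := fun ρ => Set.Finite.mem_toFinset _
  have hAΔcard : AΔ.card = n := by
    rw [hn, Set.ncard_eq_toFinset_card Δ (Set.toFinite Δ)]
  set KωF : Finset G := (Set.toFinite ((Kω : Subgroup G) : Set G)).toFinset with hKωF
  have hKωFmem : ∀ g : G, g ∈ KωF ↔ g ∈ Kω := fun g => Set.Finite.mem_toFinset _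
  have hKωFcard : KωF.card = u := by
    rw [hKωF, ← Set.ncard_eq_toFinset_card ((Kω : Subgroup G) : Set G) (Set.toFinite _),
      ← Nat.card_coe_set_eq]
    rfl
  set SF : Ω → Finset G := fun ρ =>
    (Set.toFinite (((MulAction.stabilizer G ρ ⊓ Gω : Subgroup G) : Set G))).toFinset with hSF
  have hSFmem : ∀ ρ (g : G), g ∈ SF ρ ↔ g ∈ MulAction.stabilizer G ρ ⊓ Gω :=
    fun ρ g => Set.Finite.mem_toFinset _
  have hSFcard : ∀ ρ ∈ Δ, (SF ρ).card = t := by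
    intro ρ hρ
    rw [hSF, ← Set.ncard_eq_toFinset_card _ (Set.toFinite _), ← Nat.card_coe_set_eq]
    have : Nat.card ↥((MulAction.stabilizer G ρ ⊓ Gω : Subgroup G) : Set G)
        = Nat.card ↥(MulAction.stabilizer G ρ ⊓ Gω) := rfl
    rw [this, hGω]
    exact hqt ρ ω (hρω ρ hρ)
  have hKsubS : ∀ ρ ∈ Δ, KωF ⊆ SF ρ := by
    intro ρ hρ g hg
    rw [hSFmem]
    exact hKle ρ hρ ((hKωFmem g).mp hg)
  have hdisjS : ∀ ρ ∈ AΔ, ∀ σ ∈ AΔ, ρ ≠ σ →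
      Disjoint (SF ρ \ KωF) (SF σ \ KωF) := by
    intro ρ hρ σ hσ hρσ
    rw [Finset.disjoint_left]
    intro g hg1 hg2
    rw [Finset.mem_sdiff] at hg1 hg2
    have hgρ := (hSFmem ρ g).mp hg1.1
    have hgσ := (hSFmem σ g).mp hg2.1
    have hgρσ : g ∈ MulAction.stabilizer G ρ ⊓ MulAction.stabilizer G σ := ⟨hgρ.1, hgσ.1⟩
    have hgK : g ∈ K := by
      refine ⟨MulAction.mem_stabilizer_iff.mpr ?_, MulAction.mem_stabilizer_iff.mpr ?_⟩
      · exact lemE ρ σ ((hAΔmem ρ).mp hρ) ((hAΔmem σ).mp hσ) hρσ g hgρσ α hαΔ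
      · exact lemE ρ σ ((hAΔmem ρ).mp hρ) ((hAΔmem σ).mp hσ) hρσ g hgρσ β hβΔ
    exact hg1.2 ((hKωFmem g).mpr ⟨hgK, hgρ.2⟩)
  set T : Finset G := AΔ.biUnion (fun ρ => SF ρ \ KωF) with hT
  have hTcard : T.card = n * (t - u) := by
    rw [hT, Finset.card_biUnion hdisjS]
    rw [Finset.sum_congr rfl (fun ρ hρ => show (SF ρ \ KωF).card = t - u from by
      rw [Finset.card_sdiff_of_subset (hKsubS ρ ((hAΔmem ρ).mp hρ)), hSFcard ρ ((hAΔmem ρ).mp hρ),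
        hKωFcard])]
    rw [Finset.sum_const, smul_eq_mul, hAΔcard]
  set GωF : Finset G := (Set.toFinite ((Gω : Subgroup G) : Set G)).toFinset with hGωF
  have hGωFmem : ∀ g : G, g ∈ GωF ↔ g ∈ Gω := fun g => Set.Finite.mem_toFinset _
  set cGω := Nat.card ↥Gω with hcGω
  have hGωFcard : GωF.card = cGω := by
    rw [hGωF, ← Set.ncard_eq_toFinset_card _ (Set.toFinite _), ← Nat.card_coe_set_eq]
    rfl
  have hTGω : T ∪ KωF ⊆ GωF := by
    intro g hg
    rw [Finset.mem_union] at hg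
    rw [hGωFmem]
    rcases hg with hg | hg
    · rw [hT, Finset.mem_biUnion] at hg
      obtain ⟨ρ, hρ, hgρ⟩ := hg
      rw [Finset.mem_sdiff] at hgρ
      exact ((hSFmem ρ g).mp hgρ.1).2
    · exact ((hKωFmem g).mp hg).2
  have hdisjTK : Disjoint T KωF := by
    rw [Finset.disjoint_left]
    intro g hg hgK
    rw [hT, Finset.mem_biUnion] at hg
    obtain ⟨ρ, hρ, hgρ⟩ := hg
    rw [Finset.mem_sdiff] at hgρ
    exact hgρ.2 hgK
  have hGωbound : n * (t - u) + u ≤ cGω := by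
    calc n * (t - u) + u = (T ∪ KωF).card := by
          rw [Finset.card_union_of_disjoint hdisjTK, hTcard, hKωFcard]
      _ ≤ GωF.card := Finset.card_le_card hTGω
      _ = cGω := hGωFcard
  -- Gω is transitive on Δ
  have horbΔ : ∀ ρ ∈ Δ, (MulAction.orbit Gω ρ).ncard * t = cGω := by
    intro ρ hρ
    have h1 := qt_tool1 Gω ρ
    rwa [show Nat.card ↥(Gω ⊓ MulAction.stabilizer G ρ) = t from by
      rw [hGω, inf_comm]; exact hqt ρ ω (hρω ρ hρ)] at h1
  have hΔinv : ∀ (g : Gω) (ζ : Ω), ζ ∈ Δ → (g : G) • ζ ∈ Δ := by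
    rintro g ζ ⟨h, rfl⟩
    exact ⟨(g : G) * h, (mul_smul (g : G) h α₀).symm ▸ rfl⟩
  set eΔ := (MulAction.orbit Gω α).ncard with heΔ
  have horbeqΔ : ∀ ρ ∈ Δ, (MulAction.orbit Gω ρ).ncard = eΔ := by
    intro ρ hρ
    exact Nat.eq_of_mul_eq_mul_right (by omega)
      ((horbΔ ρ hρ).trans (horbΔ α hαΔ).symm)
  have hcase := qt_tool2b Gω eΔ Δ ⟨α, hαΔ⟩ hΔinv horbeqΔ
  have hGωnt : cGω = n * t := by
    rcases hcase with ⟨ρ₀, hρ₀Δ, hρ₀orb⟩ | hge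
    · have h7 := horbΔ ρ₀ hρ₀Δ
      rw [hρ₀orb] at h7
      rw [← h7, hn]
    · -- contradiction in the intransitive case
      exfalso
      have h8 : eΔ * t = cGω := horbΔ α hαΔ
      have h9 : 2 * cGω ≤ n * t := by
        calc 2 * cGω = 2 * (eΔ * t) := by rw [h8]
          _ = (2 * eΔ) * t := by ring
          _ ≤ n * t := Nat.mul_le_mul_right t hge
      obtain ⟨s, hs⟩ : ∃ s, t = u + s := ⟨t - u, by omega⟩
      have hts : t - u = s := by omega
      rw [hts] at hGωbound
      have e1 : n * t = n * u + n * s := by rw [hs, Nat.mul_add]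
      have e2 : n * u ≤ n * s := Nat.mul_le_mul_left n (by omega : u ≤ s)
      have h20 : 2 * (n * s) + 2 * u ≤ 2 * (n * s) + 0 := by
        calc 2 * (n * s) + 2 * u = 2 * (n * s + u) := by ring
          _ ≤ 2 * cGω := Nat.mul_le_mul_left 2 hGωbound
          _ ≤ n * t := h9
          _ = n * u + n * s := e1
          _ ≤ n * s + n * s := Nat.add_le_add_right e2 _
          _ = 2 * (n * s) + 0 := by ring
      have h21 : 2 * u ≤ 0 := Nat.le_of_add_le_add_left h20
      omega
  -- global cardinalities
  have hGcard1 : m * cGω = Nat.card G := by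
    have h12 : (MulAction.stabilizer G ω).index = m := by
      rw [MulAction.index_stabilizer, hm, hΓ]
    rw [← h12, hcGω, hGω]
    exact Subgroup.index_mul_card _
  have horbα : MulAction.orbit G α = Δ := qt_orbit_eq_of_mem hαΔ
  set cGα := Nat.card ↥(MulAction.stabilizer G α) with hcGα
  have hGcard2 : n * cGα = Nat.card G := by
    have h13 : (MulAction.stabilizer G α).index = n := by
      rw [MulAction.index_stabilizer, horbα, hn]
    rw [← h13, hcGα]
    exact Subgroup.index_mul_card _
  have hnpos : 0 < n := by omega
  have hGα : cGα = m * t := by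
    apply Nat.eq_of_mul_eq_mul_left hnpos
    rw [hGcard2, ← hGcard1, hGωnt]
    ring
  -- orbits of the stabilizer of α on Δ \ {α} all have size m
  have horbm : ∀ ρ : Ω, ρ ≠ α → (MulAction.orbit (MulAction.stabilizer G α) ρ).ncard = m := by
    intro ρ hρ
    have h14 := qt_tool1 (MulAction.stabilizer G α) ρ
    rw [show Nat.card ↥(MulAction.stabilizer G α ⊓ MulAction.stabilizer G ρ) = t from
      hqt α ρ (Ne.symm hρ)] at h14
    rw [← hcGα, hGα] at h14
    exact Nat.eq_of_mul_eq_mul_right (by omega) h14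
  have hmdvd : m ∣ n - 1 := by
    apply qt_tool2a (MulAction.stabilizer G α) m (n - 1) (Δ \ {α})
    · rw [hn, Set.ncard_diff_singleton_of_mem hαΔ]
    · rintro g ζ ⟨hζΔ', hζα⟩
      have hgα : (g : G) • α = α := g.2
      constructor
      · obtain ⟨h, hh⟩ := hζΔ'
        have hh' : h • α₀ = ζ := hh
        exact ⟨(g : G) * h, show ((g : G) * h) • α₀ = (g : G) • ζ by rw [mul_smul, hh']⟩
      · simp only [Set.mem_singleton_iff] at hζα ⊢
        intro hcon
        exact hζα ((smul_left_cancel_iff ((g : G))).mp (hcon.trans hgα.symm))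
    · rintro ζ ⟨hζΔ', hζα⟩
      exact horbm ζ (by simpa using hζα)
  have hmn : m ≤ n - 1 := Nat.le_of_dvd (by omega) hmdvd
  -- orbits of Gω on Γ \ {ω} all have size n
  have horbn : ∀ σ : Ω, σ ≠ ω → (MulAction.orbit Gω σ).ncard = n := by
    intro σ hσ
    have h15 := qt_tool1 Gω σ
    rw [show Nat.card ↥(Gω ⊓ MulAction.stabilizer G σ) = t from by
      rw [hGω, inf_comm]; exact hqt σ ω hσ] at h15
    rw [← hcGω, hGωnt] at h15
    exact Nat.eq_of_mul_eq_mul_right (by omega) h15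
  have hndvd : n ∣ m - 1 := by
    apply qt_tool2a Gω n (m - 1) (Γ \ {ω})
    · rw [hm, Set.ncard_diff_singleton_of_mem (MulAction.mem_orbit_self ω)]
    · rintro g ζ ⟨hζΓ, hζω⟩
      have hgω : (g : G) • ω = ω := g.2
      constructor
      · obtain ⟨h, hh⟩ := hζΓ
        have hh' : h • ω = ζ := hh
        exact ⟨(g : G) * h, show ((g : G) * h) • ω = (g : G) • ζ by rw [mul_smul, hh']⟩
      · simp only [Set.mem_singleton_iff] at hζω ⊢
        intro hcon
        exact hζω ((smul_left_cancel_iff ((g : G))).mp (hcon.trans hgω.symm))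
    · rintro ζ ⟨hζΓ, hζω⟩
      exact horbn ζ (by simpa using hζω)
  have hnm : n ≤ m - 1 := Nat.le_of_dvd (by omega) hndvd
  omega

end Main

/-- A finite quasi-transitive but intransitive group acts primitively on each orbit:
the induced action on each orbit is transitive and every block of this action is trivial
(preprimitivity). -/
theorem quasiTransitive_intransitive_preprimitive_on_orbits
    {G Ω : Type*} [Group G] [Fintype G] [Fintype Ω] [MulAction G Ω] [FaithfulSMul G Ω]
    (t : ℕ) (ht : 1 < t)
    (hqt : ∀ α β : Ω, α ≠ β →
      Nat.card ↥(MulAction.stabilizer G α ⊓ MulAction.stabilizer G β) = t)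
    (hnt : ¬ MulAction.IsPretransitive G Ω) :
    ∀ α : Ω, MulAction.IsPretransitive G ↥(MulAction.orbit G α) ∧
      ∀ B : Set ↥(MulAction.orbit G α), MulAction.IsBlock G B →
        MulAction.IsTrivialBlock B :=
  quasiTransitive_intransitive_preprimitive_on_orbits' t ht hqt hnt
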